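/- Let H be a finite simple graph with vertex set {1,…,N} and let C be a set of l ≥ 1 distinct edges of H. Then l − 1 ≤ cost(C) ≤ 2l − 1. -/

import Mathlib

open SimpleGraph Finset

/-- For a graph on vertex set `Fin N`, the edge `e = {i, j}` is identified with the
point `x_e = b_i + b_j` in `ℝ^N`, where `b_i` is the `i`-th standard basis vector. -/
noncomputable def edgePoint (N : ℕ) (e : Sym2 (Fin N)) : EuclideanSpace ℝ (Fin N) :=
  Sym2.lift ⟨fun i j => EuclideanSpace.single i (1 : ℝ) + EuclideanSpace.single j (1 : ℝ),
    fun _ _ => add_comm _ _⟩ e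

/-- The (k-means) cost of a finite set `C` of edges:
`cost(C) = inf_{c ∈ ℝ^N} Σ_{e ∈ C} ‖x_e − c‖²`. -/
noncomputable def cost (N : ℕ) (C : Finset (Sym2 (Fin N))) : ℝ :=
  ⨅ c : EuclideanSpace ℝ (Fin N), ∑ e ∈ C, ‖edgePoint N e - c‖ ^ 2

open RealInnerProductSpace in
lemma inner_edgePoint_mk {N : ℕ} (a b c d : Fin N) :
    ⟪edgePoint N s(a, b), edgePoint N s(c, d)⟫ =
      ((if c = a then (1:ℝ) else 0) + if c = b then 1 else 0)
        + ((if d = a then 1 else 0) + if d = b then 1 else 0) := by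
  simp [edgePoint, inner_add_left, inner_add_right, EuclideanSpace.inner_single_left,
    EuclideanSpace.single_apply]
  simp only [@eq_comm _ a, @eq_comm _ b]

open RealInnerProductSpace in
lemma inner_edgePoint_nonneg {N : ℕ} (e f : Sym2 (Fin N)) :
    0 ≤ ⟪edgePoint N e, edgePoint N f⟫ := by
  induction e using Sym2.inductionOn with
  | hf a b =>
    induction f using Sym2.inductionOn with
    | hf c d =>
      rw [inner_edgePoint_mk]
      split_ifs <;> norm_num

open RealInnerProductSpace in
lemma inner_edgePoint_self {N : ℕ} (e : Sym2 (Fin N)) (he : ¬ e.IsDiag) :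
    ⟪edgePoint N e, edgePoint N e⟫ = 2 := by
  induction e using Sym2.inductionOn with
  | hf a b =>
    rw [Sym2.mk_isDiag_iff] at he
    rw [inner_edgePoint_mk]
    norm_num [he, Ne.symm he]

open RealInnerProductSpace in
lemma inner_edgePoint_le_one {N : ℕ} (e f : Sym2 (Fin N)) (he : ¬ e.IsDiag)
    (hf : ¬ f.IsDiag) (hef : e ≠ f) :
    ⟪edgePoint N e, edgePoint N f⟫ ≤ 1 := by
  induction e using Sym2.inductionOn with
  | hf a b =>
    induction f using Sym2.inductionOn with
    | hf c d =>
      rw [Sym2.mk_isDiag_iff] at he hf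
      rw [ne_eq, Sym2.eq_iff] at hef
      push_neg at hef
      rw [inner_edgePoint_mk]
      split_ifs <;> simp_all

open RealInnerProductSpace

/-- For a set `C` of `l ≥ 1` distinct edges of a finite simple graph `H`
on vertex set `{1, …, N}`, we have `l − 1 ≤ cost(C) ≤ 2l − 1`. -/
theorem statement5 {N : ℕ} (H : SimpleGraph (Fin N)) (C : Finset (Sym2 (Fin N)))
    (hC : ↑C ⊆ H.edgeSet) (l : ℕ) (hl : C.card = l) (hl1 : 1 ≤ l) :
    (l : ℝ) - 1 ≤ cost N C ∧ cost N C ≤ 2 * l - 1 := by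
  have hdiag : ∀ e ∈ C, ¬ e.IsDiag := fun e he =>
    H.not_isDiag_of_mem_edgeSet (hC he)
  set x : Sym2 (Fin N) → EuclideanSpace ℝ (Fin N) := edgePoint N with hx
  set S : EuclideanSpace ℝ (Fin N) := ∑ e ∈ C, x e with hS
  have hl0 : (0:ℝ) < l := by exact_mod_cast hl1
  have hSS : ⟪S, S⟫ = ∑ e ∈ C, ∑ f ∈ C, ⟪x e, x f⟫ := by
    rw [hS, sum_inner]
    exact Finset.sum_congr rfl fun e _ => inner_sum _ _ _
  -- lower bound on ⟪S, S⟫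
  have hSS_lo : 2 * (l:ℝ) ≤ ⟪S, S⟫ := by
    rw [hSS]
    calc 2 * (l:ℝ) = ∑ e ∈ C, (2:ℝ) := by rw [Finset.sum_const, hl]; ring
    _ ≤ ∑ e ∈ C, ∑ f ∈ C, ⟪x e, x f⟫ := by
        apply Finset.sum_le_sum
        intro e he
        calc (2:ℝ) = ⟪x e, x e⟫ := (inner_edgePoint_self e (hdiag e he)).symm
        _ ≤ ∑ f ∈ C, ⟪x e, x f⟫ :=
            Finset.single_le_sum (fun f _ => inner_edgePoint_nonneg e f) he
  -- upper bound on ⟪S, S⟫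
  have hSS_hi : ⟪S, S⟫ ≤ (l:ℝ)^2 + l := by
    rw [hSS]
    calc ∑ e ∈ C, ∑ f ∈ C, ⟪x e, x f⟫
        ≤ ∑ e ∈ C, ∑ f ∈ C, (if e = f then (2:ℝ) else 1) := by
          apply Finset.sum_le_sum; intro e he
          apply Finset.sum_le_sum; intro f hf
          by_cases hef : e = f
          · subst hef
            rw [if_pos rfl]
            exact le_of_eq (inner_edgePoint_self e (hdiag e he))
          · rw [if_neg hef]
            exact inner_edgePoint_le_one e f (hdiag e he) (hdiag f hf) hef
    _ = ∑ e ∈ C, ((l:ℝ) + 1) := by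
          apply Finset.sum_congr rfl
          intro e he
          have : ∑ f ∈ C, (if e = f then (2:ℝ) else 1)
              = ∑ f ∈ C, ((1:ℝ) + if e = f then 1 else 0) := by
            apply Finset.sum_congr rfl; intro f _; split_ifs <;> norm_num
          rw [this, Finset.sum_add_distrib, Finset.sum_const, hl,
            Finset.sum_ite_eq C e (fun _ => (1:ℝ)), if_pos he]
          simp
    _ = (l:ℝ)^2 + l := by rw [Finset.sum_const, hl]; ring
  -- expansion of the sum of squared distances
  have hexp : ∀ c : EuclideanSpace ℝ (Fin N),
      ∑ e ∈ C, ‖x e - c‖ ^ 2 = 2 * l - 2 * ⟪S, c⟫ + l * ‖c‖ ^ 2 := by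
    intro c
    have : ∀ e ∈ C, ‖x e - c‖ ^ 2 = 2 - 2 * ⟪x e, c⟫ + ‖c‖ ^ 2 := by
      intro e he
      rw [norm_sub_sq_real, ← real_inner_self_eq_norm_sq (x e),
        inner_edgePoint_self e (hdiag e he)]
    rw [Finset.sum_congr rfl this]
    rw [Finset.sum_add_distrib, Finset.sum_sub_distrib, Finset.sum_const, Finset.sum_const, hl,
      ← Finset.mul_sum, ← sum_inner]
    ring
  constructor
  · -- lower bound
    apply le_ciInf
    intro c
    rw [hexp c]
    have ht : ⟪S, c⟫ ≤ ‖S‖ * ‖c‖ := real_inner_le_norm S c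
    have hs2 : ‖S‖ ^ 2 = ⟪S, S⟫ := (real_inner_self_eq_norm_sq S).symm
    have hs2le : ‖S‖ ^ 2 ≤ (l:ℝ)^2 + l := by rw [hs2]; exact hSS_hi
    have hr : (0:ℝ) ≤ ‖c‖ := norm_nonneg c
    have hsn : (0:ℝ) ≤ ‖S‖ := norm_nonneg S
    nlinarith [sq_nonneg ((l:ℝ) * ‖c‖ - ‖S‖),
      mul_le_mul_of_nonneg_left ht (by positivity : (0:ℝ) ≤ 2 * l), sq_nonneg (‖c‖ - 1)]
  · -- upper bound
    have hbdd : BddBelow (Set.range fun c : EuclideanSpace ℝ (Fin N) =>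
        ∑ e ∈ C, ‖edgePoint N e - c‖ ^ 2) := by
      refine ⟨0, ?_⟩
      rintro _ ⟨c, rfl⟩
      positivity
    have := ciInf_le hbdd ((l:ℝ)⁻¹ • S)
    refine le_trans this ?_
    rw [hexp ((l:ℝ)⁻¹ • S)]
    rw [real_inner_smul_right, norm_smul, mul_pow]
    have h1 : ‖(l:ℝ)⁻¹‖ ^ 2 = (l:ℝ)⁻¹ ^ 2 := by
      rw [Real.norm_eq_abs, sq_abs]
    rw [h1]
    have hns : ‖S‖ ^ 2 = ⟪S, S⟫ := (real_inner_self_eq_norm_sq S).symm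
    rw [hns]
    have e1 : (l:ℝ) * ((l:ℝ)⁻¹ ^ 2 * ⟪S, S⟫) = (l:ℝ)⁻¹ * ⟪S, S⟫ := by
      field_simp
    rw [e1]
    have hinv : (0:ℝ) < (l:ℝ)⁻¹ := by positivity
    have h2 : (2:ℝ) ≤ (l:ℝ)⁻¹ * ⟪S, S⟫ := by
      have h3 := mul_le_mul_of_nonneg_left hSS_lo hinv.le
      rw [show (l:ℝ)⁻¹ * (2 * l) = 2 by field_simp] at h3
      exact h3
    linarith
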